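/- (Occam's Razor) Let D be a probability distribution on {0,1}^n, let H be a finite nonempty set of Boolean functions on {0,1}^n, let f : {0,1}^n → {0,1}, let ε, δ ∈ (0,1), and let m be an integer with m ≥ (1/ε)(ln|H| + ln(1/δ)). Draw x_1,…,x_m independently according to D. Then with probability at least 1−δ, every h ∈ H with h(x_i) = f(x_i) for all i ∈ [m] satisfies Pr_{x∼D}[h(x) ≠ f(x)] ≤ ε. -/

import Mathlib

open Finset in
lemma sum_biUnion_le_aux {ι α : Type*} [DecidableEq ι] [DecidableEq α] (s : Finset ι)
    (t : ι → Finset α) (f : α → ℝ) (hf : ∀ x, 0 ≤ f x) :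
    ∑ x ∈ s.biUnion t, f x ≤ ∑ i ∈ s, ∑ x ∈ t i, f x := by
  induction s using Finset.induction with
  | empty => simp
  | insert _ _ ha ih =>
    rename_i a s
    rw [Finset.biUnion_insert, Finset.sum_insert ha]
    calc ∑ x ∈ t a ∪ s.biUnion t, f x
        ≤ ∑ x ∈ t a, f x + ∑ x ∈ s.biUnion t, f x := by
          have := Finset.sum_union_inter (s₁ := t a) (s₂ := s.biUnion t) (f := f)
          have h0 : 0 ≤ ∑ x ∈ t a ∩ s.biUnion t, f x :=
            Finset.sum_nonneg fun x _ => hf x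
          linarith
      _ ≤ ∑ x ∈ t a, f x + ∑ i ∈ s, ∑ x ∈ t i, f x := by linarith

open Classical in
/-- Occam's Razor: if `m ≥ (1/ε)(ln |H| + ln (1/δ))` samples are drawn i.i.d.
from `D`, then with probability at least `1 - δ` every `h ∈ H` consistent with
`f` on the sample satisfies `Pr_{x ∼ D}[h x ≠ f x] ≤ ε`. -/
theorem stmt11 {n m : ℕ} (D : (Fin n → Bool) → ℝ) (hD0 : ∀ x, 0 ≤ D x)
    (hD1 : ∑ x, D x = 1)
    (H : Finset ((Fin n → Bool) → Bool)) (hH : H.Nonempty)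
    (f : (Fin n → Bool) → Bool) (ε δ : ℝ)
    (hε : ε ∈ Set.Ioo (0 : ℝ) 1) (hδ : δ ∈ Set.Ioo (0 : ℝ) 1)
    (hm : (1 / ε) * (Real.log (H.card : ℝ) + Real.log (1 / δ)) ≤ (m : ℝ)) :
    1 - δ ≤
      ∑ xs ∈ Finset.univ.filter (fun xs : Fin m → (Fin n → Bool) =>
          ∀ h ∈ H, (∀ i, h (xs i) = f (xs i)) →
            (∑ x ∈ Finset.univ.filter (fun x => h x ≠ f x), D x) ≤ ε),
        ∏ i, D (xs i) := by
  obtain ⟨hε0, hε1⟩ := hε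
  obtain ⟨hδ0, hδ1⟩ := hδ
  have hP0 : ∀ xs : Fin m → (Fin n → Bool), 0 ≤ ∏ i, D (xs i) :=
    fun xs => Finset.prod_nonneg fun i _ => hD0 _
  -- total mass is 1
  have htot : ∑ xs : Fin m → (Fin n → Bool), ∏ i, D (xs i) = 1 := by
    have := Finset.prod_univ_sum (fun _ : Fin m => (Finset.univ : Finset (Fin n → Bool)))
      (fun _ x => D x)
    rw [Fintype.piFinset_univ] at this
    rw [← this, hD1, Finset.prod_const, one_pow]
  set good := Finset.univ.filter (fun xs : Fin m → (Fin n → Bool) =>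
      ∀ h ∈ H, (∀ i, h (xs i) = f (xs i)) →
        (∑ x ∈ Finset.univ.filter (fun x => h x ≠ f x), D x) ≤ ε) with hgood
  set bad := Finset.univ.filter (fun xs : Fin m → (Fin n → Bool) =>
      ¬ ∀ h ∈ H, (∀ i, h (xs i) = f (xs i)) →
        (∑ x ∈ Finset.univ.filter (fun x => h x ≠ f x), D x) ≤ ε) with hbad
  have hsplit : (∑ xs ∈ good, ∏ i, D (xs i)) + (∑ xs ∈ bad, ∏ i, D (xs i)) = 1 := by
    rw [hgood, hbad, Finset.sum_filter_add_sum_filter_not, htot]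
  -- the far hypotheses
  set F := H.filter (fun h => ε < ∑ x ∈ Finset.univ.filter (fun x => h x ≠ f x), D x) with hF
  set C : ((Fin n → Bool) → Bool) → Finset (Fin m → (Fin n → Bool)) :=
    fun h => Finset.univ.filter (fun xs => ∀ i, h (xs i) = f (xs i)) with hC
  have hsub : bad ⊆ F.biUnion C := by
    intro xs hxs
    rw [hbad, Finset.mem_filter] at hxs
    push_neg at hxs
    obtain ⟨-, h, hhH, hcons, hfar⟩ := hxs
    rw [Finset.mem_biUnion]
    exact ⟨h, by rw [hF]; exact Finset.mem_filter.2 ⟨hhH, hfar⟩,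
      by rw [hC]; exact Finset.mem_filter.2 ⟨Finset.mem_univ _, hcons⟩⟩
  -- for each far h, its consistent-sample mass is at most (1-ε)^m
  have hone : ∀ h ∈ F, ∑ xs ∈ C h, ∏ i, D (xs i) ≤ (1 - ε) ^ m := by
    intro h hhF
    rw [hF, Finset.mem_filter] at hhF
    have hCeq : C h = Fintype.piFinset (fun _ : Fin m =>
        Finset.univ.filter (fun x => h x = f x)) := by
      ext xs
      simp [hC, Fintype.mem_piFinset]
    have := Finset.prod_univ_sum (fun _ : Fin m =>
        Finset.univ.filter (fun x : Fin n → Bool => h x = f x)) (fun _ x => D x)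
    rw [hCeq, ← this, Finset.prod_const, Finset.card_univ, Fintype.card_fin]
    have hsplit2 : (∑ x ∈ Finset.univ.filter (fun x => h x = f x), D x)
        + (∑ x ∈ Finset.univ.filter (fun x => ¬ h x = f x), D x) = 1 := by
      rw [Finset.sum_filter_add_sum_filter_not, hD1]
    have hnn : 0 ≤ ∑ x ∈ Finset.univ.filter (fun x => h x = f x), D x :=
      Finset.sum_nonneg fun x _ => hD0 x
    have hle : ∑ x ∈ Finset.univ.filter (fun x => h x = f x), D x ≤ 1 - ε := by
      have := hhF.2
      simp only [ne_eq] at this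
      linarith
    exact pow_le_pow_left₀ hnn hle m
  -- (1-ε)^m ≤ exp (-ε m)
  have hexp : (1 - ε) ^ m ≤ Real.exp (-(ε * m)) := by
    have h1 : 1 - ε ≤ Real.exp (-ε) := by
      have := Real.add_one_le_exp (-ε); linarith
    calc (1 - ε) ^ m ≤ (Real.exp (-ε)) ^ m :=
          pow_le_pow_left₀ (by linarith) h1 m
      _ = Real.exp (-(ε * m)) := by
          rw [← Real.exp_nat_mul]; ring_nf
  -- |H| * exp(-εm) ≤ δ
  have hHpos : (0 : ℝ) < (H.card : ℝ) := by
    exact_mod_cast Finset.card_pos.2 hH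
  have hεm : Real.log (H.card : ℝ) + Real.log (1 / δ) ≤ ε * m := by
    have := mul_le_mul_of_nonneg_left hm (le_of_lt hε0)
    rw [← mul_assoc, mul_one_div, div_self (ne_of_gt hε0), one_mul] at this
    linarith
  have hfinal : (H.card : ℝ) * Real.exp (-(ε * m)) ≤ δ := by
    have h2 : Real.exp (-(ε * m)) ≤ Real.exp (-(Real.log (H.card : ℝ) + Real.log (1 / δ))) :=
      Real.exp_le_exp.2 (by linarith)
    have h3 : Real.exp (-(Real.log (H.card : ℝ) + Real.log (1 / δ)))
        = (1 / (H.card : ℝ)) * δ := by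
      rw [neg_add, Real.exp_add, Real.exp_neg, Real.exp_neg,
        Real.exp_log hHpos, Real.exp_log (by positivity : (0:ℝ) < 1 / δ)]
      field_simp
    calc (H.card : ℝ) * Real.exp (-(ε * m))
        ≤ (H.card : ℝ) * ((1 / (H.card : ℝ)) * δ) := by
          rw [← h3]; exact mul_le_mul_of_nonneg_left h2 (le_of_lt hHpos)
      _ = δ := by field_simp
  -- union bound
  have hbadle : ∑ xs ∈ bad, ∏ i, D (xs i) ≤ δ := by
    calc ∑ xs ∈ bad, ∏ i, D (xs i)
        ≤ ∑ xs ∈ F.biUnion C, ∏ i, D (xs i) :=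
          Finset.sum_le_sum_of_subset_of_nonneg hsub (fun xs _ _ => hP0 xs)
      _ ≤ ∑ h ∈ F, ∑ xs ∈ C h, ∏ i, D (xs i) :=
          sum_biUnion_le_aux F C _ hP0
      _ ≤ ∑ h ∈ F, (1 - ε) ^ m := Finset.sum_le_sum hone
      _ = (F.card : ℝ) * (1 - ε) ^ m := by rw [Finset.sum_const, nsmul_eq_mul]
      _ ≤ (H.card : ℝ) * Real.exp (-(ε * m)) := by
          have hc : (F.card : ℝ) ≤ (H.card : ℝ) :=
            Nat.cast_le.2 (Finset.card_le_card (Finset.filter_subset _ _))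
          have hpow : (0:ℝ) ≤ (1 - ε) ^ m := pow_nonneg (by linarith) m
          have := mul_le_mul hc hexp hpow (le_of_lt hHpos)
          linarith
      _ ≤ δ := hfinal
  linarith
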